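/- Let R be a commutative ring, p a prime ideal of R, A ∈ R^{m×n}, b ∈ R^{1×n}. There exists a row vector y over the localization R_p with y·(A/1) = b/1 if and only if dom_R([b]_A) = { r | ∃ x, x·A = r·b } is not contained in p. -/

import Mathlib

open Matrix

theorem stmt_11 {R : Type*} [CommRing R] (p : Ideal R) [p.IsPrime]
    {m n : ℕ} (A : Matrix (Fin m) (Fin n) R) (b : Fin n → R) :
    (∃ y : Fin m → Localization.AtPrime p,
        y ᵥ* A.map (algebraMap R (Localization.AtPrime p)) =
          fun j => algebraMap R (Localization.AtPrime p) (b j)) ↔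
      ¬ {r : R | ∃ x : Fin m → R, x ᵥ* A = r • b} ⊆ (p : Set R) := by
  set S := Localization.AtPrime p
  set f := algebraMap R S with hf
  constructor
  · rintro ⟨y, hy⟩ hsub
    obtain ⟨s, hs⟩ := IsLocalization.exist_integer_multiples p.primeCompl Finset.univ y
    choose x hx using fun i => hs i (Finset.mem_univ i)
    have key : ∀ j, f ((x ᵥ* A) j) = f ((s : R) * b j) := by
      intro j
      have h1 : (x ᵥ* A) j = ∑ i, x i * A i j := by
        simp [vecMul, dotProduct]
      have h2 : (y ᵥ* A.map f) j = ∑ i, y i * f (A i j) := by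
        simp [vecMul, dotProduct, Matrix.map_apply]
      have := congrFun hy j
      rw [h2] at this
      calc f ((x ᵥ* A) j) = ∑ i, f (x i) * f (A i j) := by
            rw [h1]; simp [map_sum]
        _ = ∑ i, (s : R) • (y i * f (A i j)) := by
            apply Finset.sum_congr rfl
            intro i _
            rw [hx i, Algebra.smul_def, Algebra.smul_def, mul_assoc]
        _ = (s : R) • ∑ i, y i * f (A i j) := by rw [Finset.smul_sum]
        _ = (s : R) • f (b j) := by rw [this]
        _ = f ((s : R) * b j) := by rw [Algebra.smul_def, _root_.map_mul]
    choose c hc using fun j =>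
      (IsLocalization.eq_iff_exists p.primeCompl S).mp (key j)
    set C : p.primeCompl := ∏ j, c j with hC
    have hCeq : ∀ j, (C : R) * ((x ᵥ* A) j) = (C : R) * ((s : R) * b j) := by
      intro j
      have hprod : (C : R) = (∏ k ∈ Finset.univ.erase j, (c k : R)) * (c j : R) := by
        rw [hC]
        push_cast
        rw [Finset.prod_erase_mul _ _ (Finset.mem_univ j)]
      rw [hprod, mul_assoc, mul_assoc, hc j]
    have hmem : ((C : R) * (s : R)) ∈ {r : R | ∃ x : Fin m → R, x ᵥ* A = r • b} := by
      refine ⟨fun i => (C : R) * x i, ?_⟩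
      funext j
      have h1 : ((fun i => (C : R) * x i) ᵥ* A) j = (C : R) * ((x ᵥ* A) j) := by
        simp [vecMul, dotProduct, Finset.mul_sum, mul_assoc]
      rw [h1, hCeq j]
      simp [Pi.smul_apply, smul_eq_mul, mul_assoc]
    have := hsub hmem
    exact (mul_mem C.2 s.2 : (C : R) * (s : R) ∈ p.primeCompl) this
  · intro h
    obtain ⟨r, ⟨x, hx⟩, hr⟩ := Set.not_subset.mp h
    have hr : r ∈ p.primeCompl := hr
    refine ⟨fun i => IsLocalization.mk' S (x i) ⟨r, hr⟩, ?_⟩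
    funext j
    have hu := IsLocalization.map_units S (⟨r, hr⟩ : p.primeCompl)
    apply hu.mul_left_cancel
    have h1 : ((fun i => IsLocalization.mk' S (x i) ⟨r, hr⟩) ᵥ* A.map f) j
        = ∑ i, IsLocalization.mk' S (x i) ⟨r, hr⟩ * f (A i j) := by
      simp [vecMul, dotProduct, Matrix.map_apply]
    rw [h1, Finset.mul_sum]
    have h2 : ∀ i, f r * (IsLocalization.mk' S (x i) ⟨r, hr⟩ * f (A i j))
        = f (x i) * f (A i j) := by
      intro i
      rw [← mul_assoc, mul_comm (f r), IsLocalization.mk'_spec]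
    rw [Finset.sum_congr rfl (fun i _ => h2 i)]
    have h4 : ∑ i, f (x i) * f (A i j) = f (∑ i, x i * A i j) := by
      rw [map_sum]; exact Finset.sum_congr rfl (fun i _ => (map_mul f _ _).symm)
    rw [h4]
    have h3 : ∑ i, x i * A i j = (x ᵥ* A) j := by simp [vecMul, dotProduct]
    rw [h3, hx, ← _root_.map_mul]
    simp [mul_comm]
    rfl
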